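/- For all p ∈ [2, 4], s ∈ [4/3, 2], and r ∈ [0, 1], the inequality p(1−r)(r^s−1)(r^s−r) + 2sr(r^{s−1}−r^{s+1}) + 2r(r^{2s}−1) ≥ 0 holds. -/

import Mathlib

open Real

lemma amgm_aux {x s : ℝ} (hx : 0 < x) (hs1 : 0 ≤ s) (hs2 : s ≤ 2) :
    2 * x ^ s ≤ s * x ^ 2 + (2 - s) := by
  have h2r : x ^ (2:ℝ) = x ^ 2 := by
    rw [show (2:ℝ) = ((2:ℕ):ℝ) by norm_num, Real.rpow_natCast]
  have hxs : x ^ s = (x ^ (2:ℝ)) ^ (s/2) := by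
    rw [← Real.rpow_mul hx.le, show (2:ℝ) * (s/2) = s by ring]
  have h := Real.geom_mean_le_arith_mean2_weighted
    (by linarith : (0:ℝ) ≤ s/2) (by linarith : (0:ℝ) ≤ 1 - s/2)
    (by positivity : (0:ℝ) ≤ x ^ (2:ℝ)) zero_le_one (by ring)
  rw [Real.one_rpow, mul_one, mul_one] at h
  rw [hxs, h2r]
  rw [h2r] at h
  linarith

lemma key_ineq {s r : ℝ} (hs1 : 4/3 ≤ s) (hs2 : s ≤ 2) (hr0 : 0 < r) (hr1 : r ≤ 1) :
    r ^ 2 ≤ r ^ (2*s) + (s-1) * (1 - r^2) * r ^ s := by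
  set F : ℝ → ℝ := fun x => x ^ (2*s-2) + (s-1) * (1 - x^2) * x ^ (s-2) - 1 with hF
  have hderiv : ∀ x : ℝ, 0 < x → HasDerivAt F
      ((2*s-2) * x ^ (2*s-2-1) +
        (((s-1) * (-(2*x))) * x ^ (s-2) + ((s-1) * (1 - x^2)) * ((s-2) * x ^ (s-2-1)))) x := by
    intro x hx
    have h1 : HasDerivAt (fun y : ℝ => y ^ (2*s-2)) ((2*s-2) * x ^ (2*s-2-1)) x :=
      Real.hasDerivAt_rpow_const (Or.inl hx.ne')
    have h2 : HasDerivAt (fun y : ℝ => (1:ℝ) - y^2) (-(2*x)) x := by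
      have := (hasDerivAt_pow 2 x).const_sub (1:ℝ)
      norm_num at this
      convert this using 1
    have h3 : HasDerivAt (fun y : ℝ => y ^ (s-2)) ((s-2) * x ^ (s-2-1)) x :=
      Real.hasDerivAt_rpow_const (Or.inl hx.ne')
    have h4 := (h2.const_mul (s-1)).mul h3
    have h5 := (h1.add h4).sub_const 1
    exact h5
  have hderivle : ∀ x : ℝ, 0 < x → deriv F x ≤ 0 := by
    intro x hx
    have e1 : x ^ (2*s-2-1) = x ^ s * x ^ (s-3) := by
      rw [← Real.rpow_add hx, show s + (s-3) = 2*s-2-1 by ring]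
    have e2 : x ^ (s-2) = x * x ^ (s-3) := by
      nth_rewrite 2 [← Real.rpow_one x]
      rw [← Real.rpow_add hx, show (1:ℝ) + (s-3) = s-2 by ring]
    have e3 : x ^ (s-2-1) = x ^ (s-3) := by rw [show s-2-1 = s-3 by ring]
    have hB : 2 * x ^ s - s * x ^ 2 + (s - 2) ≤ 0 := by
      have := amgm_aux hx (by linarith : (0:ℝ) ≤ s) hs2
      linarith
    have h6 : x ^ (s-3) * ((s-1) * (2 * x ^ s - s * x ^ 2 + (s - 2))) ≤ 0 :=
      mul_nonpos_of_nonneg_of_nonpos (Real.rpow_pos_of_pos hx _).le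
        (mul_nonpos_of_nonneg_of_nonpos (by linarith) hB)
    calc deriv F x
        = x ^ (s-3) * ((s-1) * (2 * x ^ s - s * x ^ 2 + (s - 2))) := by
          rw [(hderiv x hx).deriv, e1, e2, e3]; ring
      _ ≤ 0 := h6
  have hdiffAt : ∀ x ∈ Set.Icc r 1, DifferentiableAt ℝ F x := fun x hx =>
    (hderiv x (lt_of_lt_of_le hr0 hx.1)).differentiableAt
  have hanti : AntitoneOn F (Set.Icc r 1) := by
    apply antitoneOn_of_deriv_nonpos (convex_Icc r 1)
    · exact fun x hx => (hdiffAt x hx).continuousAt.continuousWithinAt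
    · exact fun x hx => (hdiffAt x (interior_subset hx)).differentiableWithinAt
    · intro x hx
      rw [interior_Icc] at hx
      exact hderivle x (lt_of_lt_of_le hr0 hx.1.le)
  have hF1 : F 1 = 0 := by simp [hF]
  have hFr : 0 ≤ F r := by
    have := hanti (Set.mem_Icc.mpr ⟨le_refl r, hr1⟩) (Set.mem_Icc.mpr ⟨hr1, le_refl 1⟩) hr1
    rw [hF1] at this
    exact this
  have h2r : r ^ (2:ℝ) = r ^ 2 := by
    rw [show (2:ℝ) = ((2:ℕ):ℝ) by norm_num, Real.rpow_natCast]
  have f1 : r ^ (2*s) = r ^ 2 * r ^ (2*s-2) := by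
    rw [← h2r, ← Real.rpow_add hr0, show (2:ℝ) + (2*s-2) = 2*s by ring]
  have f2 : r ^ s = r ^ 2 * r ^ (s-2) := by
    rw [← h2r, ← Real.rpow_add hr0, show (2:ℝ) + (s-2) = s by ring]
  have hmul : 0 ≤ r ^ 2 * F r := mul_nonneg (by positivity) hFr
  rw [hF] at hmul
  simp only [] at hmul
  rw [f1, f2]
  nlinarith [hmul]

theorem stmt_1 (p s r : ℝ) (hp : p ∈ Set.Icc (2 : ℝ) 4)
    (hs : s ∈ Set.Icc (4/3 : ℝ) 2) (hr : r ∈ Set.Icc (0 : ℝ) 1) :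
    0 ≤ p * (1 - r) * (r ^ s - 1) * (r ^ s - r)
      + 2 * s * r * (r ^ (s - 1) - r ^ (s + 1))
      + 2 * r * (r ^ (2 * s) - 1) := by
  obtain ⟨hp1, hp2⟩ := hp
  obtain ⟨hs1, hs2⟩ := hs
  obtain ⟨hr0, hr1⟩ := hr
  rcases eq_or_lt_of_le hr0 with h0 | h0
  · rw [← h0]
    rw [Real.zero_rpow (by linarith : s ≠ 0),
        Real.zero_rpow (show s - 1 ≠ 0 by intro h; linarith),
        Real.zero_rpow (show s + 1 ≠ 0 by intro h; linarith),
        Real.zero_rpow (show 2 * s ≠ 0 by intro h; linarith)]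
    norm_num
  · have e1 : r ^ (s-1) = r ^ s / r := by rw [Real.rpow_sub h0, Real.rpow_one]
    have e2 : r ^ (s+1) = r ^ s * r := by rw [Real.rpow_add h0, Real.rpow_one]
    have e3 : r ^ (2*s) = r ^ s * r ^ s := by
      rw [show 2*s = s + s by ring, Real.rpow_add h0]
    have hx1 : r ^ s ≤ 1 := Real.rpow_le_one hr0 hr1 (by linarith)
    have hxr : r ^ s ≤ r := by
      calc r ^ s ≤ r ^ (1:ℝ) := Real.rpow_le_rpow_of_exponent_ge h0 hr1 (by linarith)
        _ = r := Real.rpow_one r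
    have hkey : r ^ 2 ≤ r ^ (2*s) + (s-1) * (1 - r^2) * r ^ s :=
      key_ineq hs1 hs2 h0 hr1
    rw [e3] at hkey
    have expand : p * (1 - r) * (r ^ s - 1) * (r ^ s - r)
          + 2 * s * r * (r ^ (s - 1) - r ^ (s + 1)) + 2 * r * (r ^ (2 * s) - 1)
        = (p-2) * (1-r) * (r^s - 1) * (r^s - r)
          + 2 * (r^s * r^s + (s-1) * (1-r^2) * r^s - r^2) := by
      rw [e1, e2, e3]
      field_simp
      ring
    rw [expand]
    have hpos : 0 ≤ (p-2) * (1-r) * (r^s - 1) * (r^s - r) := by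
      have h3 : 0 ≤ (r^s - 1) * (r^s - r) := by
        nlinarith [mul_nonneg (show (0:ℝ) ≤ 1 - r^s by linarith)
          (show (0:ℝ) ≤ r - r^s by linarith)]
      calc (0:ℝ) ≤ ((p-2) * (1-r)) * ((r^s - 1) * (r^s - r)) :=
            mul_nonneg (mul_nonneg (by linarith) (by linarith)) h3
        _ = (p-2) * (1-r) * (r^s - 1) * (r^s - r) := by ring
    linarith
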